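/- Let U ∈ ℝ^{N×N} be an orthogonal matrix, k ≥ 2, and let D_{U,k} be the distribution on {-1,1}^{kN} defined from U. For S ⊆ [kN], write S = S₁ ∪ … ∪ S_k where S_i is the intersection of S with the i-th block of N coordinates, and define D̂_{U,k}(S) = E_{z∼D_{U,k}}[∏_{i∈S} z_i]. Then D̂_{U,k}(S) = Ũ(S₁,S₂) · Ũ(S₂,S₃) ⋯ Ũ(S_{k-1},S_k), where Ũ(S,T) = E_X[ sgn( ∏_{i∈S} X_i · ∏_{j∈T} (UᵀX)_j ) ] for a standard Gaussian vector X in ℝ^N. -/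

import Mathlib

open scoped BigOperators
open MeasureTheory

/-- `U : Fin N → Fin N → ℝ` (viewed as an `N × N` real matrix `U i j`) is
orthogonal: its columns and its rows are orthonormal. -/
def IsOrthogonal {N : ℕ} (U : Fin N → Fin N → ℝ) : Prop :=
  (∀ j₁ j₂ : Fin N, ∑ i, U i j₁ * U i j₂ = if j₁ = j₂ then (1 : ℝ) else 0) ∧
  (∀ i₁ i₂ : Fin N, ∑ j, U i₁ j * U i₂ j = if i₁ = i₂ then (1 : ℝ) else 0)

/-- The sign function into `{-1,1}`: `sgn t = 1` if `t ≥ 0`, and `-1` otherwise. -/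
noncomputable def sgn (t : ℝ) : ℝ := if 0 ≤ t then 1 else -1

/-- The standard Gaussian measure on `ℝ^N`. -/
noncomputable def stdGaussianVec (N : ℕ) : MeasureTheory.Measure (Fin N → ℝ) :=
  MeasureTheory.Measure.pi fun _ => ProbabilityTheory.gaussianReal 0 1

/-- The law of `m` independent standard Gaussian vectors in `ℝ^N`. -/
noncomputable def stdGaussianFam (N m : ℕ) :
    MeasureTheory.Measure (Fin m → Fin N → ℝ) :=
  MeasureTheory.Measure.pi fun _ => stdGaussianVec N

/-- Given independent standard Gaussian vectors `X^{(1)},…,X^{(k-1)}` in `ℝ^N`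
(indexed here by `Fin (k-1)`), with `Y^{(i)} = Uᵀ X^{(i)}`, the vectors
`Z^{(1)} = X^{(1)}`, `Z^{(i)} = Y^{(i-1)} ⊙ X^{(i)}` for `2 ≤ i ≤ k-1`, and
`Z^{(k)} = Y^{(k-1)}` (0-indexed below; out-of-range cases give junk `0`). -/
noncomputable def Zfam (N k : ℕ) (U : Fin N → Fin N → ℝ)
    (X : Fin (k - 1) → Fin N → ℝ) : Fin k → Fin N → ℝ := fun a j =>
  if a.val = 0 then
    (if h : 0 < k - 1 then X ⟨0, h⟩ j else 0)
  else if a.val = k - 1 then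
    (if h : k - 2 < k - 1 then ∑ l, U l j * X ⟨k - 2, h⟩ l else 0)
  else
    (if h : a.val - 1 < k - 1 ∧ a.val < k - 1 then
      (∑ l, U l j * X ⟨a.val - 1, h.1⟩ l) * X ⟨a.val, h.2⟩ j
    else 0)

/-- The operator (spectral) norm of a real matrix `A` (given as a function):
`‖A‖ = sup_{x ≠ 0} ‖Ax‖₂ / ‖x‖₂` (and `0` if the index types are empty). -/
noncomputable def opNorm {m n : Type} [Fintype m] [Fintype n]
    (A : m → n → ℝ) : ℝ :=
  sSup {r : ℝ | ∃ x : n → ℝ, x ≠ 0 ∧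
    r = Real.sqrt (∑ i, (∑ j, A i j * x j) ^ 2) / Real.sqrt (∑ j, x j ^ 2)}

/-- The operator norm of the submatrix `U_{S,T}` of `U` with rows indexed by
`S` and columns indexed by `T`. -/
noncomputable def subOpNorm {N : ℕ} (U : Fin N → Fin N → ℝ)
    (S T : Finset (Fin N)) : ℝ :=
  opNorm (fun (i : {a // a ∈ S}) (j : {a // a ∈ T}) => U i.val j.val)

/-- `Ũ(S,T) = E_X[ sgn( ∏_{i∈S} X_i · ∏_{j∈T} (UᵀX)_j ) ]` for a standard
Gaussian vector `X` in `ℝ^N`. -/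
noncomputable def Utilde (N : ℕ) (U : Fin N → Fin N → ℝ)
    (S T : Finset (Fin N)) : ℝ :=
  ∫ X, sgn ((∏ i ∈ S, X i) * ∏ j ∈ T, ∑ l, U l j * X l) ∂(stdGaussianVec N)

/-- `D̂_{U,k}(S) = E_{z ∼ D_{U,k}}[∏_{(a,j) ∈ S} z_{a,j}]`, the `S`-moment of the
distribution `D_{U,k}` of `(sgn(Z^{(1)}),…,sgn(Z^{(k)})) ∈ {-1,1}^{kN}`
(coordinates indexed by `Fin k × Fin N`). -/
noncomputable def Dhat (N k : ℕ) (U : Fin N → Fin N → ℝ)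
    (S : Finset (Fin k × Fin N)) : ℝ :=
  ∫ X, ∏ p ∈ S, sgn (Zfam N k U X p.1 p.2) ∂(stdGaussianFam N (k - 1))

/-- The intersection of `S ⊆ [k] × [N]` with the `m`-th block (0-indexed). -/
def blockOf {N k : ℕ} (S : Finset (Fin k × Fin N)) (m : ℕ) : Finset (Fin N) :=
  (S.filter fun p => p.1.val = m).image Prod.snd

section AuxLemmas

open ProbabilityTheory

lemma sgn_mul_of_ne_zero {a b : ℝ} (ha : a ≠ 0) (hb : b ≠ 0) :
    sgn (a * b) = sgn a * sgn b := by
  unfold sgn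
  rcases ha.lt_or_gt with h | h <;> rcases hb.lt_or_gt with h' | h'
  · rw [if_pos (mul_pos_of_neg_of_neg h h').le, if_neg (not_le.2 h), if_neg (not_le.2 h')]; ring
  · rw [if_neg (not_le.2 (mul_neg_of_neg_of_pos h h')), if_neg (not_le.2 h), if_pos h'.le]; ring
  · rw [if_neg (not_le.2 (mul_neg_of_pos_of_neg h h')), if_pos h.le, if_neg (not_le.2 h')]; ring
  · rw [if_pos (mul_pos h h').le, if_pos h.le, if_pos h'.le]; ring

lemma sgn_prod {ι : Type*} (s : Finset ι) (g : ι → ℝ) (h : ∀ i ∈ s, g i ≠ 0) :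
    sgn (∏ i ∈ s, g i) = ∏ i ∈ s, sgn (g i) := by
  classical
  induction s using Finset.cons_induction with
  | empty => simp [sgn]
  | cons a s ha ih =>
    rw [Finset.prod_cons, Finset.prod_cons,
      sgn_mul_of_ne_zero (h a (Finset.mem_cons_self a s))
        (Finset.prod_ne_zero_iff.mpr fun i hi => h i (Finset.mem_cons_of_mem hi)),
      ih fun i hi => h i (Finset.mem_cons_of_mem hi)]

instance stdGaussianVec.isProbabilityMeasure (N : ℕ) :
    IsProbabilityMeasure (stdGaussianVec N) := by
  unfold stdGaussianVec; infer_instance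

instance stdGaussianFam.isProbabilityMeasure (N m : ℕ) :
    IsProbabilityMeasure (stdGaussianFam N m) := by
  unfold stdGaussianFam; infer_instance

lemma pi_absolutelyContinuous :
    ∀ (n : ℕ) (μ ν : Fin n → Measure ℝ), (∀ i, SigmaFinite (μ i)) →
      (∀ i, SigmaFinite (ν i)) → (∀ i, μ i ≪ ν i) →
      MeasureTheory.Measure.pi μ ≪ MeasureTheory.Measure.pi ν := by
  intro n
  induction n with
  | zero =>
    intro μ ν _ _ _
    rw [Measure.pi_of_empty, Measure.pi_of_empty]
  | succ n ih =>
    intro μ ν hμ hν h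
    haveI := hμ; haveI := hν
    have A := ((measurePreserving_piFinSuccAbove μ 0).symm
      (MeasurableEquiv.piFinSuccAbove (fun _ => ℝ) 0)).map_eq
    have B := ((measurePreserving_piFinSuccAbove ν 0).symm
      (MeasurableEquiv.piFinSuccAbove (fun _ => ℝ) 0)).map_eq
    rw [← A, ← B]
    have hprod : ((μ 0).prod (MeasureTheory.Measure.pi fun j => μ (Fin.succAbove 0 j))) ≪
        ((ν 0).prod (MeasureTheory.Measure.pi fun j => ν (Fin.succAbove 0 j))) :=
      (h 0).prod (ih _ _ (fun j => hμ _) (fun j => hν _) fun j => h _)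
    exact hprod.map (MeasurableEquiv.measurable _)

lemma stdGaussianVec_absolutelyContinuous (N : ℕ) :
    stdGaussianVec N ≪ (volume : Measure (Fin N → ℝ)) := by
  rw [show (volume : Measure (Fin N → ℝ)) = MeasureTheory.Measure.pi fun _ => (volume : Measure ℝ)
    from volume_pi]
  exact pi_absolutelyContinuous N _ _ (fun _ => inferInstance) (fun _ => inferInstance)
    fun _ => gaussianReal_absolutelyContinuous 0 one_ne_zero

lemma gaussian_ae_lin_ne {N : ℕ} (c : Fin N → ℝ) (hc : c ≠ 0) :
    ∀ᵐ x ∂(stdGaussianVec N), (∑ l, c l * x l) ≠ 0 := by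
  classical
  let φ : (Fin N → ℝ) →ₗ[ℝ] ℝ :=
    { toFun := fun x => ∑ l, c l * x l
      map_add' := fun x y => by
        simp only [Pi.add_apply, mul_add]
        exact Finset.sum_add_distrib
      map_smul' := fun r x => by
        simp only [Pi.smul_apply, smul_eq_mul, RingHom.id_apply, Finset.mul_sum]
        exact Finset.sum_congr rfl fun l _ => by ring }
  obtain ⟨l, hl⟩ : ∃ l, c l ≠ 0 := by
    by_contra hcontra
    push_neg at hcontra
    exact hc (funext fun l => hcontra l)
  have hker : LinearMap.ker φ ≠ ⊤ := by
    intro htop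
    have hmem : Pi.single l 1 ∈ LinearMap.ker φ := htop ▸ Submodule.mem_top
    have h0 : φ (Pi.single l 1) = 0 := LinearMap.mem_ker.1 hmem
    apply hl
    have : (∑ i, c i * (Pi.single l 1 : Fin N → ℝ) i) = c l := by
      simp [Pi.single_apply, mul_ite, Finset.sum_ite_eq', mul_one, mul_zero]
    rw [← this]
    exact h0
  have hvol : (volume : Measure (Fin N → ℝ)) (LinearMap.ker φ : Set (Fin N → ℝ)) = 0 :=
    MeasureTheory.Measure.addHaar_submodule _ _ hker
  have hset : {x : Fin N → ℝ | (∑ l, c l * x l) = 0} =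
      (LinearMap.ker φ : Set (Fin N → ℝ)) := by
    ext x
    simp only [Set.mem_setOf_eq, SetLike.mem_coe, LinearMap.mem_ker]
    exact Iff.rfl
  have h0 : stdGaussianVec N {x | (∑ l, c l * x l) = 0} = 0 := by
    apply stdGaussianVec_absolutelyContinuous N
    rw [hset]; exact hvol
  rw [MeasureTheory.ae_iff]
  simpa only [ne_eq, not_not] using h0

lemma stdGaussianFam_ae_coord {N m : ℕ} {P : (Fin N → ℝ) → Prop} (b : Fin m)
    (h : ∀ᵐ x ∂(stdGaussianVec N), P x) :
    ∀ᵐ X ∂(stdGaussianFam N m), P (X b) :=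
  MeasureTheory.Measure.ae_pi_le_pi (Filter.mem_pi_of_mem b h)

lemma integral_pi_prod {N m : ℕ} (f : Fin m → (Fin N → ℝ) → ℝ) :
    (∫ X, ∏ b, f b (X b) ∂(stdGaussianFam N m)) =
      ∏ b, ∫ x, f b x ∂(stdGaussianVec N) := by
  letI : MeasureSpace (Fin N → ℝ) := ⟨stdGaussianVec N⟩
  haveI : IsProbabilityMeasure (volume : Measure (Fin N → ℝ)) :=
    inferInstanceAs (IsProbabilityMeasure (stdGaussianVec N))
  haveI : SigmaFinite (volume : Measure (Fin N → ℝ)) := inferInstance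
  exact MeasureTheory.integral_fintype_prod_eq_prod (μ := fun _ : Fin m => stdGaussianVec N) f

end AuxLemmas

section MainLemmas

open ProbabilityTheory

noncomputable def QQaux {N m : ℕ} (B : ℕ → Finset (Fin N)) (X : Fin m → Fin N → ℝ)
    (a : Fin (m + 1)) : ℝ :=
  if h : a.val < m then ∏ j ∈ B a.val, sgn (X ⟨a.val, h⟩ j) else 1

noncomputable def PPaux {N m : ℕ} (U : Fin N → Fin N → ℝ) (B : ℕ → Finset (Fin N))
    (X : Fin m → Fin N → ℝ) (a : Fin (m + 1)) : ℝ :=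
  if h : 0 < a.val then
    ∏ j ∈ B a.val, sgn (∑ l, U l j * X ⟨a.val - 1, by have := a.isLt; omega⟩ l)
  else 1

lemma Zfam_eq_zero_case {N m : ℕ} (U : Fin N → Fin N → ℝ) (X : Fin m → Fin N → ℝ)
    (a : Fin (m + 1)) (b : Fin m) (ha : a.val = 0) (hb : b.val = 0) (j : Fin N) :
    Zfam N (m + 1) U X a j = X b j := by
  obtain ⟨bv, hbv⟩ := b
  have hb' : bv = 0 := hb
  subst hb'
  unfold Zfam
  rw [if_pos ha, dif_pos (show 0 < m + 1 - 1 from hbv)]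

lemma Zfam_eq_last_case {N m : ℕ} (U : Fin N → Fin N → ℝ) (X : Fin m → Fin N → ℝ)
    (a : Fin (m + 1)) (b : Fin m) (ha : a.val = m) (hb : b.val = m - 1) (j : Fin N) :
    Zfam N (m + 1) U X a j = ∑ l, U l j * X b l := by
  obtain ⟨bv, hbv⟩ := b
  have hb' : bv = m - 1 := hb
  subst hb'
  unfold Zfam
  rw [if_neg (show ¬ a.val = 0 by omega), if_pos (show a.val = m + 1 - 1 from ha),
    dif_pos (show m + 1 - 2 < m + 1 - 1 by omega)]
  rfl

lemma Zfam_eq_mid_case {N m : ℕ} (U : Fin N → Fin N → ℝ) (X : Fin m → Fin N → ℝ)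
    (a : Fin (m + 1)) (b₁ b₂ : Fin m) (h0 : 0 < a.val) (h1 : a.val < m)
    (hb₁ : b₁.val = a.val - 1) (hb₂ : b₂.val = a.val) (j : Fin N) :
    Zfam N (m + 1) U X a j = (∑ l, U l j * X b₁ l) * X b₂ j := by
  obtain ⟨bv₁, hbv₁⟩ := b₁
  obtain ⟨bv₂, hbv₂⟩ := b₂
  have hb₁' : bv₁ = a.val - 1 := hb₁
  have hb₂' : bv₂ = a.val := hb₂
  subst hb₁'; subst hb₂'
  unfold Zfam
  rw [if_neg (show ¬ a.val = 0 by omega), if_neg (show ¬ a.val = m + 1 - 1 by omega),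
    dif_pos (show a.val - 1 < m + 1 - 1 ∧ a.val < m + 1 - 1 by omega)]

lemma prod_sgn_Zfam_eq {N m : ℕ} (hm : 0 < m) (U : Fin N → Fin N → ℝ)
    (S : Finset (Fin (m + 1) × Fin N)) (X : Fin m → Fin N → ℝ)
    (hX : ∀ b j, X b j ≠ 0)
    (hL : ∀ (b : Fin m) (j : Fin N), (∑ l, U l j * X b l) ≠ 0) :
    (∏ p ∈ S, sgn (Zfam N (m + 1) U X p.1 p.2)) =
      ∏ b : Fin m,
        sgn ((∏ i ∈ blockOf S b.val, X b i) *
          ∏ j ∈ blockOf S (b.val + 1), ∑ l, U l j * X b l) := by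
  classical
  set B : ℕ → Finset (Fin N) := fun t => blockOf S t with hB
  have step1 : (∏ p ∈ S, sgn (Zfam N (m + 1) U X p.1 p.2)) =
      ∏ a : Fin (m + 1), ∏ j ∈ B a.val, sgn (Zfam N (m + 1) U X a j) := by
    rw [← Finset.prod_fiberwise_of_maps_to (g := Prod.fst) (t := Finset.univ)
      (fun p _ => Finset.mem_univ _) (fun p => sgn (Zfam N (m + 1) U X p.1 p.2))]
    refine Finset.prod_congr rfl fun a _ => ?_
    have h1 : S.filter (fun p => p.1 = a) = S.filter (fun p => p.1.val = a.val) :=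
      Finset.filter_congr fun p _ => by simp [Fin.ext_iff]
    have h2 : B a.val = (S.filter (fun p => p.1.val = a.val)).image Prod.snd := rfl
    rw [h1, h2, Finset.prod_image (fun x hx y hy hxy => Prod.ext
      (Fin.ext (((Finset.mem_filter.1 hx).2).trans ((Finset.mem_filter.1 hy).2).symm)) hxy)]
    refine Finset.prod_congr rfl fun p hp => ?_
    have hp1 : p.1 = a := Fin.ext (Finset.mem_filter.1 hp).2
    rw [hp1]
  rw [step1]
  have step2 : ∀ a : Fin (m + 1),
      (∏ j ∈ B a.val, sgn (Zfam N (m + 1) U X a j)) = QQaux B X a * PPaux U B X a := by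
    intro a
    unfold QQaux PPaux
    rcases Nat.eq_zero_or_pos a.val with h0 | h0
    · rw [dif_pos (show a.val < m by omega), dif_neg (show ¬ 0 < a.val by omega), mul_one]
      refine Finset.prod_congr rfl fun j _ => ?_
      rw [Zfam_eq_zero_case U X a ⟨a.val, by omega⟩ h0 h0 j]
    · rcases Nat.lt_or_ge a.val m with h1 | h1
      · rw [dif_pos h1, dif_pos h0, ← Finset.prod_mul_distrib]
        refine Finset.prod_congr rfl fun j _ => ?_
        rw [Zfam_eq_mid_case U X a ⟨a.val - 1, by omega⟩ ⟨a.val, h1⟩ h0 h1 rfl rfl j,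
          sgn_mul_of_ne_zero (hL _ j) (hX _ j), mul_comm]
      · have ha : a.val = m := by have := a.isLt; omega
        rw [dif_neg (show ¬ a.val < m by omega), dif_pos h0, one_mul]
        refine Finset.prod_congr rfl fun j _ => ?_
        rw [Zfam_eq_last_case U X a ⟨a.val - 1, by have := a.isLt; omega⟩ ha
          (show a.val - 1 = m - 1 by omega) j]
  rw [Finset.prod_congr rfl fun a _ => step2 a, Finset.prod_mul_distrib]
  have hQ : (∏ a : Fin (m + 1), QQaux B X a) =
      ∏ b : Fin m, ∏ j ∈ B b.val, sgn (X b j) := by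
    rw [Fin.prod_univ_castSucc]
    have hlast : QQaux B X (Fin.last m) = 1 := dif_neg (by simp)
    rw [hlast, mul_one]
    refine Finset.prod_congr rfl fun b _ => ?_
    unfold QQaux
    rw [dif_pos (show (Fin.castSucc b).val < m from b.isLt)]
    rfl
  have hP : (∏ a : Fin (m + 1), PPaux U B X a) =
      ∏ b : Fin m, ∏ j ∈ B (b.val + 1), sgn (∑ l, U l j * X b l) := by
    rw [Fin.prod_univ_succ]
    have h0 : PPaux U B X 0 = 1 := dif_neg (by simp)
    rw [h0, one_mul]
    refine Finset.prod_congr rfl fun b _ => ?_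
    unfold PPaux
    rw [dif_pos (show 0 < (Fin.succ b).val from Nat.succ_pos _)]
    rfl
  rw [hQ, hP, ← Finset.prod_mul_distrib]
  refine Finset.prod_congr rfl fun b _ => ?_
  rw [sgn_mul_of_ne_zero
      (Finset.prod_ne_zero_iff.2 fun i _ => hX b i)
      (Finset.prod_ne_zero_iff.2 fun j _ => hL b j),
    sgn_prod _ _ (fun i _ => hX b i), sgn_prod _ _ (fun j _ => hL b j)]

end MainLemmas


/-- for an orthogonal `U ∈ ℝ^{N×N}`, `k ≥ 2`, and
`S ⊆ [kN]` with blocks `S₁,…,S_k`,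
`D̂_{U,k}(S) = Ũ(S₁,S₂)·Ũ(S₂,S₃)⋯Ũ(S_{k-1},S_k)`. -/
theorem Dhat_eq_prod_Utilde (N k : ℕ) (hk : 2 ≤ k)
    (U : Fin N → Fin N → ℝ) (hU : IsOrthogonal U)
    (S : Finset (Fin k × Fin N)) :
    Dhat N k U S =
      ∏ b : Fin (k - 1), Utilde N U (blockOf S b.val) (blockOf S (b.val + 1)) := by
  classical
  obtain ⟨m, rfl⟩ : ∃ m, k = m + 1 := ⟨k - 1, by omega⟩
  have hm : 0 < m := by omega
  have hcol : ∀ j : Fin N, (fun l => U l j) ≠ 0 := by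
    intro j hzero
    have h1 := hU.1 j j
    rw [if_pos rfl] at h1
    have hz : ∀ i, U i j = 0 := fun i => congrFun hzero i
    simp only [hz, mul_zero, Finset.sum_const_zero] at h1
    exact zero_ne_one h1
  have hsingle : ∀ j : Fin N, (Pi.single j 1 : Fin N → ℝ) ≠ 0 := by
    intro j h
    have := congrFun h j
    simp at this
  have hx_vec : ∀ᵐ x ∂(stdGaussianVec N), ∀ j, x j ≠ 0 := by
    rw [MeasureTheory.ae_all_iff]
    intro j
    refine (gaussian_ae_lin_ne (Pi.single j 1) (hsingle j)).mono fun x hx => ?_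
    simpa [Pi.single_apply, ite_mul, one_mul, zero_mul, Finset.sum_ite_eq'] using hx
  have hL_vec : ∀ᵐ x ∂(stdGaussianVec N), ∀ j, (∑ l, U l j * x l) ≠ 0 := by
    rw [MeasureTheory.ae_all_iff]
    intro j
    exact gaussian_ae_lin_ne (fun l => U l j) (hcol j)
  have h1 : ∀ᵐ X ∂(stdGaussianFam N m), ∀ (b : Fin m) (j : Fin N), X b j ≠ 0 := by
    rw [MeasureTheory.ae_all_iff]
    exact fun b => stdGaussianFam_ae_coord b hx_vec
  have h2 : ∀ᵐ X ∂(stdGaussianFam N m), ∀ (b : Fin m) (j : Fin N),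
      (∑ l, U l j * X b l) ≠ 0 := by
    rw [MeasureTheory.ae_all_iff]
    exact fun b => stdGaussianFam_ae_coord b hL_vec
  have hint : (∫ X, ∏ p ∈ S, sgn (Zfam N (m + 1) U X p.1 p.2) ∂(stdGaussianFam N m)) =
      ∫ X, ∏ b : Fin m,
        sgn ((∏ i ∈ blockOf S b.val, X b i) *
          ∏ j ∈ blockOf S (b.val + 1), ∑ l, U l j * X b l) ∂(stdGaussianFam N m) :=
    MeasureTheory.integral_congr_ae ((h1.and h2).mono fun X hX =>
      prod_sgn_Zfam_eq hm U S X hX.1 hX.2)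
  show (∫ X, ∏ p ∈ S, sgn (Zfam N (m + 1) U X p.1 p.2) ∂(stdGaussianFam N m)) =
      ∏ b : Fin m, Utilde N U (blockOf S b.val) (blockOf S (b.val + 1))
  rw [hint, integral_pi_prod (fun b x =>
    sgn ((∏ i ∈ blockOf S b.val, x i) * ∏ j ∈ blockOf S (b.val + 1), ∑ l, U l j * x l))]
  rfl
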